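/- For positive integers m ≥ 2, n ≥ 1, and complex q with |q| < (m-1)/m^{m/(m-1)}, the series x defined by x^n-expansion q^n · ∑_{t=0}^∞ A_t(m, n) q^{(m-1)t} converges absolutely; moreover the sum y = q · ∑_{t=0}^∞ A_t(m, 1) q^{(m-1)t} satisfies Lambert's trinomial equation y = q + y^m, and y^n equals q^n · ∑_{t=0}^∞ A_t(m, n) q^{(m-1)t}. -/

import Mathlib

/-- Fuss–Catalan number `A_t(μ, r)` with complex parameters:
`A_0 = 1` and for `t ≥ 1`, `A_t(μ, r) = (r/t!) ∏_{j=1}^{t-1}(tμ + r - j)`. -/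
noncomputable def fussCatalan (μ r : ℂ) (t : ℕ) : ℂ :=
  if t = 0 then 1
  else r / (Nat.factorial t : ℂ) *
    ∏ j ∈ Finset.Icc 1 (t - 1), ((t : ℂ) * μ + r - (j : ℂ))

open Finset Filter Topology



/-- falling product `x (x-1) ⋯ (x-k+1)` -/
noncomputable def P (k : ℕ) (x : ℂ) : ℂ := ∏ i ∈ Finset.range k, (x - i)

lemma P_zero (x : ℂ) : P 0 x = 1 := rfl

lemma P_succ_right (k : ℕ) (x : ℂ) : P (k + 1) x = P k x * (x - k) :=
  Finset.prod_range_succ _ _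

lemma P_succ_left (k : ℕ) (x : ℂ) : P (k + 1) x = x * P k (x - 1) := by
  unfold P
  rw [Finset.prod_range_succ']
  rw [mul_comm]
  congr 1
  · push_cast; ring_nf
  refine Finset.prod_congr rfl fun i _ => ?_
  push_cast; ring

lemma fussCatalan_succ (μ r : ℂ) (t : ℕ) :
    fussCatalan μ r (t + 1) =
      r / (Nat.factorial (t + 1) : ℂ) * P t (((t : ℂ) + 1) * μ + r - 1) := by
  unfold fussCatalan P
  rw [if_neg (Nat.succ_ne_zero t)]
  congr 1
  have h : Finset.Icc 1 (t + 1 - 1) = Finset.Ico 1 (t + 1) := by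
    rw [Nat.succ_sub_one, Finset.Ico_add_one_right_eq_Icc]
  rw [h, Finset.prod_Ico_eq_prod_range]
  refine Finset.prod_congr rfl fun i _ => ?_
  push_cast; ring

lemma fussCatalan_zero (μ r : ℂ) : fussCatalan μ r 0 = 1 := rfl

lemma fussCatalan_one (μ r : ℂ) : fussCatalan μ r 1 = r := by
  rw [fussCatalan_succ]
  simp [P]

lemma fussCatalan_r_zero (μ : ℂ) (t : ℕ) (ht : t ≠ 0) : fussCatalan μ 0 t = 0 := by
  unfold fussCatalan
  rw [if_neg ht, zero_div, zero_mul]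
lemma fc_rec (m r t : ℕ) :
    fussCatalan (m : ℂ) ((r : ℂ) + 1) (t + 1) =
      fussCatalan (m : ℂ) (r : ℂ) (t + 1) + fussCatalan (m : ℂ) ((r : ℂ) + (m : ℂ)) t := by
  cases t with
  | zero =>
      rw [fussCatalan_one, fussCatalan_one, fussCatalan_zero]
  | succ s =>
      have hfac : ((Nat.factorial (s + 1 + 1) : ℂ)) = ((s : ℂ) + 2) * (Nat.factorial (s + 1) : ℂ) := by
        rw [Nat.factorial_succ]; push_cast; ring
      have hfac0 : (Nat.factorial (s + 1) : ℂ) ≠ 0 := by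
        exact_mod_cast Nat.factorial_ne_zero (s + 1)
      have hs2 : ((s : ℂ) + 2) ≠ 0 := by
        intro h
        have := congrArg Complex.re h
        simp at this
        nlinarith [this]
      set Y : ℂ := ((s : ℂ) + 2) * (m : ℂ) + (r : ℂ) - 1 with hY
      rw [fussCatalan_succ, fussCatalan_succ, fussCatalan_succ]
      have h1 : (((s + 1 : ℕ) : ℂ) + 1) * (m : ℂ) + ((r : ℂ) + 1) - 1 = Y + 1 := by
        rw [hY]; push_cast; ring
      have h2 : (((s + 1 : ℕ) : ℂ) + 1) * (m : ℂ) + (r : ℂ) - 1 = Y := by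
        rw [hY]; push_cast; ring
      have h3 : (((s : ℕ) : ℂ) + 1) * (m : ℂ) + ((r : ℂ) + (m : ℂ)) - 1 = Y := by
        rw [hY]; push_cast; ring
      rw [h1, h2, h3, P_succ_left, P_succ_right, hfac]
      have h4 : Y + 1 - 1 = Y := by ring
      rw [h4]
      field_simp
      ring

lemma fc_shift (m t : ℕ) :
    fussCatalan (m : ℂ) 1 (t + 1) = fussCatalan (m : ℂ) (m : ℂ) t := by
  cases t with
  | zero => rw [fussCatalan_one, fussCatalan_zero]
  | succ s =>
      have hfac : ((Nat.factorial (s + 1 + 1) : ℂ)) = ((s : ℂ) + 2) * (Nat.factorial (s + 1) : ℂ) := by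
        rw [Nat.factorial_succ]; push_cast; ring
      have hfac0 : (Nat.factorial (s + 1) : ℂ) ≠ 0 := by
        exact_mod_cast Nat.factorial_ne_zero (s + 1)
      have hs2 : ((s : ℂ) + 2) ≠ 0 := by
        intro h
        have := congrArg Complex.re h
        simp at this
        nlinarith [this]
      rw [fussCatalan_succ, fussCatalan_succ]
      have h1 : (((s + 1 : ℕ) : ℂ) + 1) * (m : ℂ) + (1 : ℂ) - 1 = ((s : ℂ) + 2) * (m : ℂ) := by
        push_cast; ring
      have h2 : (((s : ℕ) : ℂ) + 1) * (m : ℂ) + (m : ℂ) - 1 = ((s : ℂ) + 2) * (m : ℂ) - 1 := by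
        push_cast; ring
      rw [h1, h2, P_succ_left, hfac]
      field_simp

lemma fc_conv (m : ℕ) : ∀ t b a : ℕ,
    (∑ k ∈ Finset.range (t + 1),
      fussCatalan (m : ℂ) (a : ℂ) k * fussCatalan (m : ℂ) (b : ℂ) (t - k)) =
    fussCatalan (m : ℂ) ((a + b : ℕ) : ℂ) t := by
  intro t
  induction t using Nat.strong_induction_on with
  | _ t ih =>
    intro b
    induction b with
    | zero =>
        intro a
        rw [Finset.sum_eq_single t]
        · simp [fussCatalan_zero]
        · intro k hk hkt
          have hk' : k < t + 1 := Finset.mem_range.mp hk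
          have hk2 : k < t := lt_of_le_of_ne (Nat.lt_succ_iff.mp hk') hkt
          have : t - k ≠ 0 := Nat.sub_ne_zero_of_lt hk2
          rw [Nat.cast_zero, fussCatalan_r_zero _ _ this, mul_zero]
        · intro h; exact absurd (Finset.self_mem_range_succ t) h
    | succ b ihb =>
        intro a
        cases t with
        | zero => simp [fussCatalan_zero]
        | succ s =>
            have key : ∀ k ∈ Finset.range (s + 1),
                fussCatalan (m : ℂ) (a : ℂ) k * fussCatalan (m : ℂ) ((b + 1 : ℕ) : ℂ) (s + 1 - k) =
                fussCatalan (m : ℂ) (a : ℂ) k * fussCatalan (m : ℂ) (b : ℂ) (s + 1 - k) +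
                fussCatalan (m : ℂ) (a : ℂ) k * fussCatalan (m : ℂ) ((b + m : ℕ) : ℂ) (s - k) := by
              intro k hk
              have hks : k ≤ s := Nat.lt_succ_iff.mp (Finset.mem_range.mp hk)
              have hsub : s + 1 - k = (s - k) + 1 := by omega
              rw [hsub]
              push_cast
              rw [fc_rec m b (s - k)]
              ring
            rw [Finset.sum_range_succ, Finset.sum_congr rfl key, Finset.sum_add_distrib,
              Nat.sub_self, fussCatalan_zero, mul_one,
              show a + (b + 1) = (a + b) + 1 by omega]
            have hA := ihb a
            rw [Finset.sum_range_succ, Nat.sub_self, fussCatalan_zero, mul_one] at hA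
            have hB := ih s (by omega) (b + m) a
            rw [show a + (b + m) = (a + b) + m by omega] at hB
            rw [hB]
            have hrec := fc_rec m (a + b) s
            rw [show (((a + b + 1 : ℕ)) : ℂ) = ((a + b : ℕ) : ℂ) + 1 by push_cast; ring]
            rw [hrec, ← hA,
              show ((a + b : ℕ) : ℂ) + (m : ℂ) = (((a + b + m : ℕ)) : ℂ) by push_cast; ring]
            ring

lemma descprod (N : ℕ) : ∀ k : ℕ, k ≤ N →
    (∏ i ∈ Finset.range k, (N - i)) * Nat.factorial (N - k) = Nat.factorial N := by
  intro k
  induction k with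
  | zero => simp
  | succ k ihk =>
      intro hk
      have h1 : N - (k + 1) = N - k - 1 := by omega
      have h2 : 0 < N - k := by omega
      rw [Finset.prod_range_succ, h1, mul_assoc,
        Nat.mul_factorial_pred h2.ne']
      exact ihk (by omega)

lemma fact_add (N : ℕ) : ∀ k : ℕ,
    Nat.factorial (N + k) = Nat.factorial N * ∏ i ∈ Finset.range k, (N + 1 + i) := by
  intro k
  induction k with
  | zero => simp
  | succ k ihk =>
      rw [Finset.prod_range_succ, show N + (k + 1) = (N + k) + 1 by omega,
        Nat.factorial_succ, ihk]
      ring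

/-- real-valued factorial formula for the Fuss–Catalan numbers -/
noncomputable def aa (m n t : ℕ) : ℝ :=
  (n : ℝ) * (Nat.factorial (m * t + n - 1) : ℝ) /
    ((Nat.factorial t : ℝ) * (Nat.factorial ((m - 1) * t + n) : ℝ))

lemma aa_pos (m n t : ℕ) (hn : 1 ≤ n) : 0 < aa m n t := by
  unfold aa
  positivity

lemma P_natCast (N k : ℕ) (hk : k ≤ N) :
    P k (N : ℂ) = ((∏ i ∈ Finset.range k, (N - i) : ℕ) : ℂ) := by
  unfold P
  rw [Nat.cast_prod]
  refine Finset.prod_congr rfl fun i hi => ?_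
  have : i ≤ N := le_trans (le_of_lt (Finset.mem_range.mp hi)) hk
  rw [Nat.cast_sub this]

lemma fc_eq_aa (m n t : ℕ) (hm : 2 ≤ m) (hn : 1 ≤ n) :
    fussCatalan (m : ℂ) (n : ℂ) t = ((aa m n t : ℝ) : ℂ) := by
  cases t with
  | zero =>
      unfold aa
      rw [fussCatalan_zero]
      rw [show m * 0 + n - 1 = n - 1 by omega, show (m - 1) * 0 + n = n by omega]
      rw [show Nat.factorial 0 = 1 from rfl]
      have h : (n : ℝ) * (Nat.factorial (n - 1) : ℝ) = (Nat.factorial n : ℝ) := by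
        rw [← Nat.mul_factorial_pred (by omega : n ≠ 0)]; push_cast; ring
      rw [h]
      have : (Nat.factorial n : ℝ) ≠ 0 := by positivity
      field_simp
      simp
  | succ t =>
      obtain ⟨m', rfl⟩ : ∃ m', m = m' + 1 := ⟨m - 1, by omega⟩
      rw [fussCatalan_succ]
      set N : ℕ := (m' + 1) * (t + 1) + n - 1 with hN
      have hNadd : N + 1 = (m' + 1) * (t + 1) + n := by
        have : 1 ≤ (m' + 1) * (t + 1) := Nat.one_le_iff_ne_zero.mpr (by positivity)
        omega
      have hcast : ((t : ℂ) + 1) * ((m' + 1 : ℕ) : ℂ) + (n : ℂ) - 1 = (N : ℂ) := by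
        have := congrArg (fun x : ℕ => (x : ℂ)) hNadd
        push_cast at this ⊢
        linear_combination -this
      have htN : t ≤ N := by
        have : t + 1 ≤ (m' + 1) * (t + 1) := Nat.le_mul_of_pos_left _ (by omega)
        omega
      rw [hcast, P_natCast N t htN]
      have e1 : m' * (t + 1) + (t + 1) = (m' + 1) * (t + 1) := by ring
      have hsub2 : m' * (t + 1) + n = N - t := by omega
      have hd := descprod N t htN
      have hfne : (Nat.factorial (N - t) : ℂ) ≠ 0 := by
        exact_mod_cast Nat.factorial_ne_zero _
      have hprod : ((∏ i ∈ Finset.range t, (N - i) : ℕ) : ℂ) =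
          (Nat.factorial N : ℂ) / (Nat.factorial (N - t) : ℂ) := by
        rw [eq_div_iff hfne]
        exact_mod_cast congrArg (fun x : ℕ => (x : ℂ)) hd
      rw [hprod]
      unfold aa
      rw [← hN]
      rw [show m' + 1 - 1 = m' from rfl, hsub2]
      have hf1 : ((Nat.factorial (t + 1) : ℂ)) ≠ 0 := by exact_mod_cast Nat.factorial_ne_zero _
      have hf2 : ((Nat.factorial (N - t) : ℂ)) ≠ 0 := hfne
      push_cast
      field_simp

lemma ratio_eq (m n t : ℕ) (hm : 2 ≤ m) (hn : 1 ≤ n) :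
    aa m n (t + 1) * (((t : ℝ) + 1) *
        ((∏ i ∈ Finset.range (m - 1), ((m - 1) * t + n + 1 + i) : ℕ) : ℝ)) =
      aa m n t * ((∏ i ∈ Finset.range m, (m * t + n + i) : ℕ) : ℝ) := by
  obtain ⟨m', rfl⟩ : ∃ m', m = m' + 2 := ⟨m - 2, by omega⟩
  simp only [show m' + 2 - 1 = m' + 1 from rfl]
  have F : Nat.factorial ((m' + 2) * (t + 1) + n - 1) =
      Nat.factorial ((m' + 2) * t + n - 1) * ∏ i ∈ Finset.range (m' + 2), ((m' + 2) * t + n + i) := by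
    have hr1 : (m' + 2) * (t + 1) = (m' + 2) * t + (m' + 2) := by ring
    rw [show (m' + 2) * (t + 1) + n - 1 = ((m' + 2) * t + n - 1) + (m' + 2) by omega, fact_add]
    congr 1
    exact Finset.prod_congr rfl fun i _ => by omega
  have G : Nat.factorial ((m' + 1) * (t + 1) + n) =
      Nat.factorial ((m' + 1) * t + n) * ∏ i ∈ Finset.range (m' + 1), ((m' + 1) * t + n + 1 + i) := by
    have hr2 : (m' + 1) * (t + 1) = (m' + 1) * t + (m' + 1) := by ring
    rw [show (m' + 1) * (t + 1) + n = ((m' + 1) * t + n) + (m' + 1) by omega, fact_add]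
  have hDp : ((∏ i ∈ Finset.range (m' + 1), ((m' + 1) * t + n + 1 + i) : ℕ) : ℝ) ≠ 0 := by
    have h : 0 < ∏ i ∈ Finset.range (m' + 1), ((m' + 1) * t + n + 1 + i) :=
      Finset.prod_pos fun i _ => by omega
    exact_mod_cast h.ne'
  have hf1 : ((Nat.factorial t : ℝ)) ≠ 0 := by positivity
  have hf2 : ((Nat.factorial ((m' + 1) * t + n) : ℝ)) ≠ 0 := by positivity
  have ht1 : ((t : ℝ) + 1) ≠ 0 := by positivity
  unfold aa
  simp only [show m' + 2 - 1 = m' + 1 from rfl]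
  rw [F, G, Nat.factorial_succ, Nat.cast_mul, Nat.cast_mul, Nat.cast_mul]
  push_cast at hDp ⊢
  field_simp

lemma tendsto_ratio (m n : ℕ) (hm : 2 ≤ m) (hn : 1 ≤ n) :
    Filter.Tendsto (fun t : ℕ => aa m n (t + 1) / aa m n t) atTop
      (𝓝 ((m : ℝ) ^ m / (((m - 1 : ℕ)) : ℝ) ^ (m - 1))) := by
  have hfac : ∀ c : ℕ, 1 ≤ c → ∀ b : ℕ,
      Filter.Tendsto (fun t : ℕ => ((c * t + b : ℕ) : ℝ) / ((t : ℝ) + 1)) atTop (𝓝 (c : ℝ)) := by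
    intro c hc b
    have heq : ∀ t : ℕ, ((c * t + b : ℕ) : ℝ) / ((t : ℝ) + 1) =
        (c : ℝ) + ((b : ℝ) - c) * (1 / ((t : ℝ) + 1)) := by
      intro t
      have ht : ((t : ℝ) + 1) ≠ 0 := by positivity
      push_cast
      field_simp
      ring
    have : Filter.Tendsto (fun t : ℕ => (c : ℝ) + ((b : ℝ) - c) * (1 / ((t : ℝ) + 1))) atTop
        (𝓝 ((c : ℝ) + ((b : ℝ) - c) * 0)) :=
      tendsto_const_nhds.add (tendsto_const_nhds.mul tendsto_one_div_add_atTop_nhds_zero_nat)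
    rw [mul_zero, add_zero] at this
    exact this.congr fun t => (heq t).symm
  have hnum : Filter.Tendsto
      (fun t : ℕ => ∏ i ∈ Finset.range m, (((m * t + n + i : ℕ) : ℝ) / ((t : ℝ) + 1)))
      atTop (𝓝 ((m : ℝ) ^ m)) := by
    have := tendsto_finset_prod (Finset.range m)
      (fun i (_ : i ∈ Finset.range m) => hfac m (by omega) (n + i))
    simp only [Finset.prod_const, Finset.card_range] at this
    exact this.congr fun t => by
      refine Finset.prod_congr rfl fun i _ => by rw [show m * t + (n + i) = m * t + n + i by omega]
  have hden : Filter.Tendsto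
      (fun t : ℕ => ∏ i ∈ Finset.range (m - 1), ((((m - 1) * t + n + 1 + i : ℕ) : ℝ) / ((t : ℝ) + 1)))
      atTop (𝓝 ((((m - 1 : ℕ)) : ℝ) ^ (m - 1))) := by
    have := tendsto_finset_prod (Finset.range (m - 1))
      (fun i (_ : i ∈ Finset.range (m - 1)) => hfac (m - 1) (by omega) (n + 1 + i))
    simp only [Finset.prod_const, Finset.card_range] at this
    exact this.congr fun t => by
      refine Finset.prod_congr rfl fun i _ => by
        rw [show (m - 1) * t + (n + 1 + i) = (m - 1) * t + n + 1 + i by omega]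
  have hdne : ((((m - 1 : ℕ)) : ℝ) ^ (m - 1)) ≠ 0 := by
    have : (1 : ℝ) ≤ ((m - 1 : ℕ) : ℝ) := by exact_mod_cast Nat.one_le_iff_ne_zero.mpr (by omega)
    positivity
  have htend := hnum.div hden hdne
  refine htend.congr fun t => ?_
  simp only [Pi.div_apply]
  have ht1 : ((t : ℝ) + 1) ≠ 0 := by positivity
  have hDp : ((∏ i ∈ Finset.range (m - 1), ((m - 1) * t + n + 1 + i) : ℕ) : ℝ) ≠ 0 := by
    have h : 0 < ∏ i ∈ Finset.range (m - 1), ((m - 1) * t + n + 1 + i) :=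
      Finset.prod_pos fun i _ => by omega
    exact_mod_cast h.ne'
  have haat : aa m n t ≠ 0 := ne_of_gt (aa_pos m n t hn)
  have key := ratio_eq m n t hm hn
  rw [Finset.prod_div_distrib, Finset.prod_div_distrib, Finset.prod_const, Finset.prod_const,
    Finset.card_range, Finset.card_range, div_div_div_eq, ← Nat.cast_prod, ← Nat.cast_prod]
  have hD1 : ((t : ℝ) + 1) ^ m * ((∏ i ∈ Finset.range (m - 1), ((m - 1) * t + n + 1 + i) : ℕ) : ℝ) ≠ 0 :=
    mul_ne_zero (pow_ne_zero _ ht1) hDp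
  rw [div_eq_div_iff hD1 haat]
  obtain ⟨m', rfl⟩ : ∃ m', m = m' + 2 := ⟨m - 2, by omega⟩
  simp only [show m' + 2 - 1 = m' + 1 from rfl] at key ⊢
  linear_combination (-(((t : ℝ) + 1) ^ (m' + 1))) * key

lemma hz_bound (m : ℕ) (hm : 2 ≤ m) (q : ℂ)
    (hq : ‖q‖ < ((m : ℝ) - 1) / (m : ℝ) ^ ((m : ℝ) / ((m : ℝ) - 1))) :
    ‖q‖ ^ (m - 1) * ((m : ℝ) ^ m / (((m - 1 : ℕ)) : ℝ) ^ (m - 1)) < 1 := by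
  have hm1 : ((m - 1 : ℕ) : ℝ) = (m : ℝ) - 1 := by
    push_cast [Nat.cast_sub (by omega : 1 ≤ m)]; ring
  have hm2 : (2 : ℝ) ≤ (m : ℝ) := by exact_mod_cast hm
  have hmpos : (0 : ℝ) < (m : ℝ) := by linarith
  have hm1pos : (0 : ℝ) < (m : ℝ) - 1 := by linarith
  have hrpos : (0 : ℝ) < (m : ℝ) ^ ((m : ℝ) / ((m : ℝ) - 1)) := Real.rpow_pos_of_pos hmpos _
  -- raise hq to the (m-1) power
  have hpow : ‖q‖ ^ (m - 1) <
      (((m : ℝ) - 1) / (m : ℝ) ^ ((m : ℝ) / ((m : ℝ) - 1))) ^ (m - 1) :=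
    pow_lt_pow_left₀ hq (norm_nonneg q) (by omega)
  have hkey : (((m : ℝ) - 1) / (m : ℝ) ^ ((m : ℝ) / ((m : ℝ) - 1))) ^ (m - 1) =
      ((m : ℝ) - 1) ^ (m - 1) / (m : ℝ) ^ m := by
    rw [div_pow]
    congr 1
    rw [← Real.rpow_natCast ((m : ℝ) ^ ((m : ℝ) / ((m : ℝ) - 1))) (m - 1),
      ← Real.rpow_mul (le_of_lt hmpos), hm1,
      div_mul_cancel₀ _ (ne_of_gt hm1pos), Real.rpow_natCast]
  have hL : (0 : ℝ) < (m : ℝ) ^ m / (((m - 1 : ℕ)) : ℝ) ^ (m - 1) := by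
    rw [hm1]; positivity
  have step := mul_lt_mul_of_pos_right (lt_of_lt_of_le hpow (le_of_eq hkey)) hL
  refine lt_of_lt_of_le step (le_of_eq ?_)
  rw [hm1]
  have h1 : ((m : ℝ) - 1) ^ (m - 1) ≠ 0 := by positivity
  have h2 : ((m : ℝ)) ^ m ≠ 0 := by positivity
  field_simp

lemma summable_aa (m n : ℕ) (hm : 2 ≤ m) (hn : 1 ≤ n) (q : ℂ)
    (hq : ‖q‖ < ((m : ℝ) - 1) / (m : ℝ) ^ ((m : ℝ) / ((m : ℝ) - 1))) :
    Summable (fun t : ℕ => aa m n t * ‖q‖ ^ ((m - 1) * t)) := by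
  set c : ℝ := ‖q‖ ^ (m - 1) with hc
  have hc0 : 0 ≤ c := by positivity
  have hcL : ((m : ℝ) ^ m / (((m - 1 : ℕ)) : ℝ) ^ (m - 1)) * c < 1 := by
    rw [mul_comm]; exact hz_bound m hm q hq
  obtain ⟨r, hr1, hr2⟩ := exists_between hcL
  have htends := (tendsto_ratio m n hm hn).mul_const c
  have hev : ∀ᶠ t in atTop, aa m n (t + 1) / aa m n t * c < r :=
    Filter.Tendsto.eventually_lt_const hr1 htends
  have hsum : Summable (fun t : ℕ => aa m n t * c ^ t) := by
    apply summable_of_ratio_norm_eventually_le hr2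
    filter_upwards [hev] with t ht
    have hat : 0 < aa m n t := aa_pos m n t hn
    have hat1 : 0 < aa m n (t + 1) := aa_pos m n (t + 1) hn
    have e : aa m n (t + 1) * c ^ (t + 1) =
        (aa m n (t + 1) / aa m n t * c) * (aa m n t * c ^ t) := by
      field_simp
      ring
    rw [Real.norm_eq_abs, Real.norm_eq_abs, abs_of_nonneg (by positivity),
      abs_of_nonneg (by positivity), e]
    exact mul_le_mul_of_nonneg_right (le_of_lt ht) (by positivity)
  refine hsum.congr fun t => ?_
  rw [pow_mul]

lemma summable_norm_fc (m n : ℕ) (hm : 2 ≤ m) (hn : 1 ≤ n) (q : ℂ)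
    (hq : ‖q‖ < ((m : ℝ) - 1) / (m : ℝ) ^ ((m : ℝ) / ((m : ℝ) - 1))) :
    Summable (fun t : ℕ => ‖fussCatalan (m : ℂ) (n : ℂ) t * q ^ ((m - 1) * t)‖) := by
  refine (summable_aa m n hm hn q hq).congr fun t => ?_
  rw [norm_mul, norm_pow,
    fc_eq_aa m n t hm hn, Complex.norm_real, Real.norm_eq_abs, abs_of_nonneg (le_of_lt (aa_pos m n t hn))]

lemma S_mul (m a b : ℕ) (hm : 2 ≤ m) (ha : 1 ≤ a) (hb : 1 ≤ b) (q : ℂ)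
    (hq : ‖q‖ < ((m : ℝ) - 1) / (m : ℝ) ^ ((m : ℝ) / ((m : ℝ) - 1))) :
    (∑' t : ℕ, fussCatalan (m : ℂ) (a : ℂ) t * q ^ ((m - 1) * t)) *
      (∑' t : ℕ, fussCatalan (m : ℂ) (b : ℂ) t * q ^ ((m - 1) * t)) =
    ∑' t : ℕ, fussCatalan (m : ℂ) ((a + b : ℕ) : ℂ) t * q ^ ((m - 1) * t) := by
  rw [tsum_mul_tsum_eq_tsum_sum_range_of_summable_norm
    (summable_norm_fc m a hm ha q hq) (summable_norm_fc m b hm hb q hq)]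
  refine tsum_congr fun t => ?_
  have hterm : ∀ k ∈ Finset.range (t + 1),
      (fussCatalan (m : ℂ) (a : ℂ) k * q ^ ((m - 1) * k)) *
        (fussCatalan (m : ℂ) (b : ℂ) (t - k) * q ^ ((m - 1) * (t - k))) =
      (fussCatalan (m : ℂ) (a : ℂ) k * fussCatalan (m : ℂ) (b : ℂ) (t - k)) *
        q ^ ((m - 1) * t) := by
    intro k hk
    have hkt : k ≤ t := Nat.lt_succ_iff.mp (Finset.mem_range.mp hk)
    have hsplit : (m - 1) * k + (m - 1) * (t - k) = (m - 1) * t := by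
      rw [← Nat.mul_add]
      congr 1
      omega
    rw [← hsplit, pow_add]
    ring
  rw [Finset.sum_congr rfl hterm, ← Finset.sum_mul, fc_conv m t b a]

lemma S_pow (m : ℕ) (hm : 2 ≤ m) (q : ℂ)
    (hq : ‖q‖ < ((m : ℝ) - 1) / (m : ℝ) ^ ((m : ℝ) / ((m : ℝ) - 1))) :
    ∀ r : ℕ, 1 ≤ r →
    (∑' t : ℕ, fussCatalan (m : ℂ) ((1 : ℕ) : ℂ) t * q ^ ((m - 1) * t)) ^ r =
      ∑' t : ℕ, fussCatalan (m : ℂ) (r : ℂ) t * q ^ ((m - 1) * t) := by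
  intro r hr
  induction r, hr using Nat.le_induction with
  | base => rw [pow_one]
  | succ r hr ih =>
      rw [pow_succ, ih, S_mul m r 1 hm hr le_rfl q hq]


/-- For `m ≥ 2`, `n ≥ 1` and `|q| < (m-1)/m^{m/(m-1)}`, the series
`q^n ∑_t A_t(m,n) q^{(m-1)t}` converges absolutely; the sum
`y = q ∑_t A_t(m,1) q^{(m-1)t}` satisfies Lambert's trinomial `y = q + y^m`,
and `y^n = q^n ∑_t A_t(m,n) q^{(m-1)t}`. -/
theorem lambert_trinomial_series (m n : ℕ) (hm : 2 ≤ m) (hn : 1 ≤ n) (q : ℂ)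
    (hq : ‖q‖ < ((m : ℝ) - 1) / (m : ℝ) ^ ((m : ℝ) / ((m : ℝ) - 1))) :
    Summable (fun t : ℕ =>
      ‖q ^ n * (fussCatalan (m : ℂ) (n : ℂ) t * q ^ ((m - 1) * t))‖) ∧
    (q * ∑' t : ℕ, fussCatalan (m : ℂ) 1 t * q ^ ((m - 1) * t)) =
      q + (q * ∑' t : ℕ, fussCatalan (m : ℂ) 1 t * q ^ ((m - 1) * t)) ^ m ∧
    (q * ∑' t : ℕ, fussCatalan (m : ℂ) 1 t * q ^ ((m - 1) * t)) ^ n =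
      q ^ n * ∑' t : ℕ, fussCatalan (m : ℂ) (n : ℂ) t * q ^ ((m - 1) * t) := by
  have hone : (1 : ℂ) = ((1 : ℕ) : ℂ) := by norm_num
  refine ⟨?_, ?_, ?_⟩
  · refine ((summable_norm_fc m n hm hn q hq).mul_left (‖q‖ ^ n)).congr
      fun t => ?_
    simp only [norm_mul, norm_pow]
  · -- functional equation
    rw [hone]
    set S1 : ℂ := ∑' t : ℕ, fussCatalan (m : ℂ) ((1 : ℕ) : ℂ) t * q ^ ((m - 1) * t) with hS1
    set Sm : ℂ := ∑' t : ℕ, fussCatalan (m : ℂ) (m : ℂ) t * q ^ ((m - 1) * t) with hSm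
    have hsum1 : Summable (fun t : ℕ => fussCatalan (m : ℂ) ((1 : ℕ) : ℂ) t * q ^ ((m - 1) * t)) :=
      (summable_norm_fc m 1 hm le_rfl q hq).of_norm
    have hshift : S1 = 1 + q ^ (m - 1) * Sm := by
      rw [hS1, Summable.tsum_eq_zero_add hsum1]
      congr 1
      · rw [fussCatalan_zero, Nat.mul_zero, pow_zero, mul_one]
      · rw [← tsum_mul_left]
        refine tsum_congr fun t => ?_
        rw [show ((1 : ℕ) : ℂ) = (1 : ℂ) by norm_num, fc_shift m t,
          show (m - 1) * (t + 1) = (m - 1) + (m - 1) * t by ring, pow_add]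
        ring
    have hpow : (q * S1) ^ m = q ^ m * Sm := by
      rw [mul_pow, hS1, S_pow m hm q hq m (by omega), ← hSm]
    have hm' : m = (m - 1) + 1 := by omega
    have hq' : q ^ m = q ^ (m - 1) * q := by
      nth_rewrite 1 [hm']
      rw [pow_succ]
    rw [hpow, hshift]
    linear_combination (-Sm) * hq'
  · rw [hone, mul_pow, S_pow m hm q hq n hn]
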